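/- Let k be a commutative ring with unit and Λ a finite meet semilattice, regarded as a commutative semigroup under the operation x·y := x ⊓ y. Then the map Φ from the semigroup algebra kΛ to the product ring k^Λ (functions Λ → k with pointwise operations), defined on f ∈ kΛ by Φ(f)(z) = Σ_{x ∈ Λ, z ≤ x} f(x), is additive, multiplicative (Φ(f·g) = Φ(f)·Φ(g) pointwise), and bijective. In particular kΛ ≅ k^Λ as rings, so kΛ is unital. -/

import Mathlib

open Finset

open Classical in
noncomputable def solveAux {k : Type*} [CommRing k] {Λ : Type*} [Fintype Λ] [PartialOrder Λ]
    (g : Λ → k) : Λ → k :=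
  (wellFounded_gt (α := Λ)).fix fun y ih =>
    g y - ∑ z ∈ (Finset.univ.filter fun z => y < z).attach,
      ih z.1 (Finset.mem_filter.1 z.2).2

open Classical in
lemma solveAux_eq {k : Type*} [CommRing k] {Λ : Type*} [Fintype Λ] [PartialOrder Λ]
    (g : Λ → k) (x : Λ) :
    solveAux g x = g x - ∑ z ∈ (Finset.univ.filter fun z => x < z), solveAux g z := by
  conv_rhs => rw [← Finset.sum_attach (Finset.univ.filter fun z => x < z)
    (fun z => solveAux g z)]
  rw [solveAux, WellFounded.fix_eq]



open Finset in
/-- Solomon's theorem: for a finite meet semilattice `Λ` (with multiplication `x ⊓ y`)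
and a commutative ring `k`, the map `Φ(f)(z) = Σ_{z ≤ x} f(x)` is an additive,
multiplicative bijection from the semigroup algebra `kΛ` to the product ring `k^Λ`;
in particular `kΛ ≅ k^Λ` is unital. -/
theorem stmt8 {k : Type*} [CommRing k] {Λ : Type*} [Fintype Λ] [SemilatticeInf Λ]
    [DecidableRel ((· ≤ ·) : Λ → Λ → Prop)]
    [Mul Λ] (hmul : ∀ x y : Λ, x * y = x ⊓ y) :
    (∀ f g : MonoidAlgebra k Λ, ∀ z : Λ,
      (∑ x ∈ univ.filter (fun x => z ≤ x), (f + g).coeff x) =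
        (∑ x ∈ univ.filter (fun x => z ≤ x), f.coeff x) +
          (∑ x ∈ univ.filter (fun x => z ≤ x), g.coeff x)) ∧
    (∀ f g : MonoidAlgebra k Λ, ∀ z : Λ,
      (∑ x ∈ univ.filter (fun x => z ≤ x), (f * g).coeff x) =
        (∑ x ∈ univ.filter (fun x => z ≤ x), f.coeff x) *
          (∑ x ∈ univ.filter (fun x => z ≤ x), g.coeff x)) ∧
    Function.Bijective (fun (f : MonoidAlgebra k Λ) (z : Λ) =>
      ∑ x ∈ univ.filter (fun x => z ≤ x), f.coeff x) := by
  classical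
  -- additivity
  have hadd : ∀ f g : MonoidAlgebra k Λ, ∀ z : Λ,
      (∑ x ∈ univ.filter (fun x => z ≤ x), (f + g).coeff x) =
        (∑ x ∈ univ.filter (fun x => z ≤ x), f.coeff x) +
          (∑ x ∈ univ.filter (fun x => z ≤ x), g.coeff x) := by
    intro f g z
    rw [← Finset.sum_add_distrib]
    exact Finset.sum_congr rfl fun x _ => rfl
  -- value on single
  have hsingle : ∀ (a : Λ) (c : k) (z : Λ),
      (∑ x ∈ univ.filter (fun x => z ≤ x), (MonoidAlgebra.single a c : MonoidAlgebra k Λ).coeff x)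
        = if z ≤ a then c else 0 := by
    intro a c z
    rw [Finset.sum_filter]
    simp only [MonoidAlgebra.coeff_single, Finsupp.single_apply]
    rw [Finset.sum_eq_single a (fun b _ hb => by simp [Ne.symm hb]) (by simp)]
    simp
  -- split of the sum at z
  have hsplit : ∀ (f : Λ → k) (z : Λ),
      (∑ x ∈ univ.filter (fun x => z ≤ x), f x)
        = f z + ∑ x ∈ univ.filter (fun x => z < x), f x := by
    intro f z
    have : univ.filter (fun x => z ≤ x) = insert z (univ.filter (fun x => z < x)) := by
      ext y
      simp [le_iff_lt_or_eq, or_comm, eq_comm]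
    rw [this, Finset.sum_insert (by simp)]
  refine ⟨hadd, ?_, ?_, ?_⟩
  · -- multiplicativity
    intro f g z
    induction f using MonoidAlgebra.induction_linear with
    | zero => simp
    | add f1 f2 h1 h2 => rw [add_mul, hadd, h1, h2, hadd, add_mul]
    | single a c =>
      induction g using MonoidAlgebra.induction_linear with
      | zero => simp
      | add g1 g2 h1 h2 => rw [mul_add, hadd, h1, h2, hadd, mul_add]
      | single b d =>
        rw [MonoidAlgebra.single_mul_single, hsingle, hsingle, hsingle, hmul]
        by_cases ha : z ≤ a <;> by_cases hb : z ≤ b <;>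
          simp [le_inf_iff, ha, hb]
  · -- injectivity
    intro f g hfg
    have key : ∀ x, f.coeff x = g.coeff x := by
      intro x
      induction x using WellFoundedGT.induction with
      | _ x ih =>
        have h1 := congrFun hfg x
        simp only at h1
        rw [hsplit (f.coeff ·) x, hsplit (g.coeff ·) x] at h1
        have h2 : (∑ y ∈ univ.filter (fun y => x < y), f.coeff y)
            = ∑ y ∈ univ.filter (fun y => x < y), g.coeff y :=
          Finset.sum_congr rfl fun y hy => ih y (Finset.mem_filter.1 hy).2
        rw [h2] at h1
        exact add_right_cancel h1
    exact MonoidAlgebra.ext (Finsupp.ext key)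
  · -- surjectivity
    intro g
    refine ⟨MonoidAlgebra.ofCoeff (Finsupp.equivFunOnFinite.symm (solveAux g)), ?_⟩
    funext z
    simp only [MonoidAlgebra.coeff_ofCoeff, Finsupp.coe_equivFunOnFinite_symm]
    rw [hsplit (solveAux g) z, solveAux_eq]
    ring
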